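/- Let A, B : ℤ → K satisfy Q_α A = 0, A(0) = 1, A(1) = (α + α⁻¹)/2, and Q_α B = 0, B(0) = 0, B(1) = 1. Let a, b be real numbers with b - a > 2. Consider the linear map φ sending a finitely supported function f : ℤ → K with support contained in {x ∈ ℤ : a < x < b} to the pair (∑_{x∈ℤ} f(x)·A(x), ∑_{x∈ℤ} f(x)·B(x)) ∈ K². Then (i) φ is surjective, and (ii) φ(f) = (0,0) if and only if there exists a finitely supported g : ℤ → K with support contained in {x ∈ ℤ : a+1 < x < b-1} such that Q_α g = f. (In other words, φ induces an isomorphism between the cokernel of Q_α : Map(ℤ∩(a+1,b-1),K) → Map(ℤ∩(a,b),K) and K·q ⊕ K·p.) -/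

import Mathlib

/-- The massive discrete Laplace-type operator `Q_α`. -/
def discreteLaplaceAlpha {K : Type*} [Field K] (α : K) (f : ℤ → K) : ℤ → K :=
  fun x => f (x - 1) - (α + α⁻¹) * f x + f (x + 1)

section Aux

variable {K : Type*} [Field K]

/-- The Wronskian of two solutions is constant, hence always `1` under the
given initial conditions. -/
theorem discreteLaplaceAlpha_wronskian (α : K) (A B : ℤ → K)
    (hA : discreteLaplaceAlpha α A = 0) (hA0 : A 0 = 1)
    (hB : discreteLaplaceAlpha α B = 0) (hB0 : B 0 = 0) (hB1 : B 1 = 1) :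
    ∀ x : ℤ, A x * B (x + 1) - A (x + 1) * B x = 1 := by
  have hQA : ∀ x : ℤ, A (x - 1) - (α + α⁻¹) * A x + A (x + 1) = 0 := fun x => congrFun hA x
  have hQB : ∀ x : ℤ, B (x - 1) - (α + α⁻¹) * B x + B (x + 1) = 0 := fun x => congrFun hB x
  set w : ℤ → K := fun x => A x * B (x + 1) - A (x + 1) * B x with hw
  have hw0 : w 0 = 1 := by simp [hw, hA0, hB0, hB1]
  have hstep : ∀ x : ℤ, w (x + 1) = w x := by
    intro x
    have hA' := hQA (x + 1)
    have hB' := hQB (x + 1)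
    simp only [add_sub_cancel_right] at hA' hB'
    show A (x+1) * B (x+1+1) - A (x+1+1) * B (x+1) = A x * B (x+1) - A (x+1) * B x
    linear_combination A (x + 1) * hB' - B (x + 1) * hA'
  intro x
  induction x using Int.induction_on with
  | zero => exact hw0
  | succ k ih => exact (hstep k).trans ih
  | pred k ih =>
      have h := hstep (-(k : ℤ) - 1)
      rw [show (-(k : ℤ) - 1 + 1) = -(k : ℤ) by ring] at h
      show w (-(k : ℤ) - 1) = 1
      rw [← h]; exact ih

end Aux

/-- For `b - a > 2`, the map `f ↦ (∑ₓ f(x)·A(x), ∑ₓ f(x)·B(x))` on functions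
supported in `ℤ ∩ (a, b)` is surjective, and its kernel is exactly the image of
`Q_α` applied to functions supported in `ℤ ∩ (a+1, b-1)`.  In other words it
identifies the cokernel of `Q_α : Map(ℤ∩(a+1,b-1),K) → Map(ℤ∩(a,b),K)` with
`K·q ⊕ K·p`. -/
theorem discreteLaplaceAlpha_cokernel_iso
    {K : Type*} [Field K] [CharZero K] (α : K) (hα : α ≠ 0)
    (A B : ℤ → K)
    (hA : discreteLaplaceAlpha α A = 0) (hA0 : A 0 = 1)
    (hA1 : A 1 = (α + α⁻¹) / 2)
    (hB : discreteLaplaceAlpha α B = 0) (hB0 : B 0 = 0) (hB1 : B 1 = 1)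
    (a b : ℝ) (hab : b - a > 2) :
    (∀ c d : K, ∃ f : ℤ → K,
      Function.support f ⊆ {x : ℤ | a < (x : ℝ) ∧ (x : ℝ) < b} ∧
      (∑ᶠ x : ℤ, f x * A x) = c ∧ (∑ᶠ x : ℤ, f x * B x) = d) ∧
    (∀ f : ℤ → K,
      Function.support f ⊆ {x : ℤ | a < (x : ℝ) ∧ (x : ℝ) < b} →
      (((∑ᶠ x : ℤ, f x * A x) = 0 ∧ (∑ᶠ x : ℤ, f x * B x) = 0) ↔
        ∃ g : ℤ → K,
          Function.support g ⊆ {x : ℤ | a + 1 < (x : ℝ) ∧ (x : ℝ) < b - 1} ∧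
          discreteLaplaceAlpha α g = f)) := by
  have hQA : ∀ x : ℤ, A (x - 1) - (α + α⁻¹) * A x + A (x + 1) = 0 := fun x => congrFun hA x
  have hQB : ∀ x : ℤ, B (x - 1) - (α + α⁻¹) * B x + B (x + 1) = 0 := fun x => congrFun hB x
  have hw : ∀ x : ℤ, A x * B (x + 1) - A (x + 1) * B x = 1 :=
    discreteLaplaceAlpha_wronskian α A B hA hA0 hB hB0 hB1
  set n0 : ℤ := ⌊a⌋ + 1 with hn0
  set n1 : ℤ := ⌈b⌉ - 1 with hn1
  have hn0a : a < (n0 : ℝ) := by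
    rw [hn0]; push_cast; exact Int.lt_floor_add_one a
  have hn0a' : (n0 : ℝ) ≤ a + 1 := by
    rw [hn0]; push_cast
    have := Int.floor_le a; linarith
  have hmem : ∀ x : ℤ, a < (x : ℝ) → (x : ℝ) < b → n0 ≤ x ∧ x ≤ n1 := by
    intro x h1 h2
    constructor
    · have : ⌊a⌋ < x := Int.floor_lt.mpr h1
      omega
    · have : x < ⌈b⌉ := Int.lt_ceil.mpr h2
      omega
  constructor
  · -- surjectivity
    intro c d
    have hne : n0 ≠ n0 + 1 := by omega
    refine ⟨fun x => if x = n0 then c * B (n0 + 1) - d * A (n0 + 1)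
        else if x = n0 + 1 then d * A n0 - c * B n0 else 0, ?_, ?_, ?_⟩
    · intro x hx
      have hx' : x = n0 ∨ x = n0 + 1 := by
        by_contra hc
        push_neg at hc
        simp [hc.1, hc.2] at hx
      have hb1 : ((n0 : ℝ) + 1) < b := by linarith
      rcases hx' with rfl | rfl
      · exact ⟨hn0a, by linarith⟩
      · simp only [Set.mem_setOf_eq]
        push_cast
        exact ⟨by linarith, by linarith⟩
    · rw [finsum_eq_finset_sum_of_support_subset _
        (s := ({n0, n0 + 1} : Finset ℤ)) (by
          intro x hx
          simp only [Function.mem_support] at hx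
          by_contra hc
          simp only [Finset.coe_insert, Finset.coe_singleton, Set.mem_insert_iff,
            Set.mem_singleton_iff] at hc
          push_neg at hc
          simp [hc.1, hc.2] at hx)]
      rw [Finset.sum_pair hne]
      have h1 : n0 + 1 ≠ n0 := by omega
      simp only [if_neg h1, eq_self_iff_true, if_true]
      linear_combination c * hw n0
    · rw [finsum_eq_finset_sum_of_support_subset _
        (s := ({n0, n0 + 1} : Finset ℤ)) (by
          intro x hx
          simp only [Function.mem_support] at hx
          by_contra hc
          simp only [Finset.coe_insert, Finset.coe_singleton, Set.mem_insert_iff,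
            Set.mem_singleton_iff] at hc
          push_neg at hc
          simp [hc.1, hc.2] at hx)]
      rw [Finset.sum_pair hne]
      have h1 : n0 + 1 ≠ n0 := by omega
      simp only [if_neg h1, eq_self_iff_true, if_true]
      linear_combination d * hw n0
  · -- kernel description
    intro f hf
    have hsupf : ∀ x : ℤ, f x ≠ 0 → n0 ≤ x ∧ x ≤ n1 := by
      intro x hx
      have := hf hx
      exact hmem x this.1 this.2
    have hfA : Function.support (fun x => f x * A x) ⊆ ↑(Finset.Icc n0 n1) := by
      intro x hx
      simp only [Function.mem_support] at hx
      have : f x ≠ 0 := fun h => hx (by simp [h])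
      simpa [Finset.mem_Icc] using hsupf x this
    have hfB : Function.support (fun x => f x * B x) ⊆ ↑(Finset.Icc n0 n1) := by
      intro x hx
      simp only [Function.mem_support] at hx
      have : f x ≠ 0 := fun h => hx (by simp [h])
      simpa [Finset.mem_Icc] using hsupf x this
    constructor
    · -- build explicit preimage g
      rintro ⟨hsumA, hsumB⟩
      set g : ℤ → K := fun x => ∑ y ∈ Finset.Icc n0 (x - 1),
        f y * (A y * B x - B y * A x) with hgdef
      have hg_alt : ∀ x : ℤ, g x = ∑ y ∈ Finset.Icc n0 x, f y * (A y * B x - B y * A x) := by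
        intro x
        rcases le_or_gt n0 x with h | h
        · have hins : Finset.Icc n0 x = insert x (Finset.Icc n0 (x - 1)) := by
            ext y; simp only [Finset.mem_Icc, Finset.mem_insert]; omega
          rw [hins, Finset.sum_insert (by simp [Finset.mem_Icc])]
          have : f x * (A x * B x - B x * A x) = 0 := by ring
          rw [this, zero_add]
        · rw [hgdef]
          simp only
          rw [Finset.Icc_eq_empty (by omega), Finset.Icc_eq_empty (by omega)]
      -- the full sum version when x ≥ n1
      have hg_zero_hi : ∀ x : ℤ, n1 ≤ x → g x = 0 := by
        intro x hx
        rw [hg_alt x]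
        have hAx : (∑ y ∈ Finset.Icc n0 x, f y * A y) = 0 := by
          rw [← finsum_eq_finset_sum_of_support_subset _
            (s := Finset.Icc n0 x) (fun y hy => by
              have := hfA hy
              simp only [Finset.coe_Icc, Set.mem_Icc] at this ⊢
              omega)]
          exact hsumA
        have hBx : (∑ y ∈ Finset.Icc n0 x, f y * B y) = 0 := by
          rw [← finsum_eq_finset_sum_of_support_subset _
            (s := Finset.Icc n0 x) (fun y hy => by
              have := hfB hy
              simp only [Finset.coe_Icc, Set.mem_Icc] at this ⊢
              omega)]
          exact hsumB
        calc (∑ y ∈ Finset.Icc n0 x, f y * (A y * B x - B y * A x))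
            = (∑ y ∈ Finset.Icc n0 x, f y * A y) * B x
              - (∑ y ∈ Finset.Icc n0 x, f y * B y) * A x := by
              rw [Finset.sum_mul, Finset.sum_mul, ← Finset.sum_sub_distrib]
              apply Finset.sum_congr rfl
              intro y _; ring
          _ = 0 := by rw [hAx, hBx]; ring
      refine ⟨g, ?_, ?_⟩
      · -- support of g
        intro x hx
        simp only [Function.mem_support] at hx
        simp only [Set.mem_setOf_eq]
        by_contra hc
        push_neg at hc
        rcases le_or_gt (b - 1) (x : ℝ) with h | h
        · -- x ≥ b - 1, so n1 ≤ x
          have : ⌈b⌉ ≤ x + 1 := by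
            rw [Int.ceil_le]; push_cast; linarith
          exact hx (hg_zero_hi x (by omega))
        · have h1 : (x : ℝ) ≤ a + 1 := by
            by_contra hgt
            push_neg at hgt
            exact absurd (hc hgt) (by linarith)
          have : x ≤ ⌊a + 1⌋ := Int.le_floor.mpr h1
          rw [Int.floor_add_one] at this
          apply hx
          rw [hgdef]
          simp only
          rw [Finset.Icc_eq_empty (by omega), Finset.sum_empty]
      · -- Q g = f
        funext x
        show g (x - 1) - (α + α⁻¹) * g x + g (x + 1) = f x
        set S : ℤ → K := fun z => ∑ y ∈ Finset.Icc n0 x, f y * (A y * B z - B y * A z)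
          with hS
        have hgx : g x = S x := hg_alt x
        have hgp : g (x + 1) = S (x + 1) := by
          rw [hgdef]; simp only [add_sub_cancel_right]; rfl
        have hgm : g (x - 1) = S (x - 1) + f x := by
          rcases lt_trichotomy x n0 with h | h | h
          · have hfx : f x = 0 := by
              by_contra hc; have := hsupf x hc; omega
            rw [hfx, add_zero, hgdef, hS]
            simp only
            rw [Finset.Icc_eq_empty (by omega), Finset.Icc_eq_empty (by omega)]
          · subst h
            rw [hgdef, hS]
            simp only
            rw [Finset.Icc_eq_empty (by omega), Finset.sum_empty,
              show Finset.Icc n0 n0 = {n0} by rw [Finset.Icc_self], Finset.sum_singleton]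
            have hww := hw (n0 - 1)
            rw [show n0 - 1 + 1 = n0 by ring] at hww
            linear_combination f n0 * hww
          · have hins : Finset.Icc n0 x
                = insert x (insert (x - 1) (Finset.Icc n0 (x - 1 - 1))) := by
              ext y
              simp only [Finset.mem_Icc, Finset.mem_insert]
              omega
            rw [hS]
            simp only
            rw [hins, Finset.sum_insert (by simp only [Finset.mem_insert, Finset.mem_Icc]; omega),
              Finset.sum_insert (by simp only [Finset.mem_Icc]; omega)]
            have hww := hw (x - 1)
            rw [show x - 1 + 1 = x by ring] at hww
            rw [hgdef]
            simp only
            linear_combination f x * hww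
        rw [hgx, hgp, hgm]
        have hkey : S (x - 1) - (α + α⁻¹) * S x + S (x + 1) = 0 := by
          rw [hS]
          simp only
          rw [Finset.mul_sum, ← Finset.sum_sub_distrib, ← Finset.sum_add_distrib]
          apply Finset.sum_eq_zero
          intro y _
          linear_combination f y * A y * hQB x - f y * B y * hQA x
        linear_combination hkey
    · -- converse: sums vanish on image of Q
      rintro ⟨g, hgsup, hgQ⟩
      have hgfin : (Function.support g).Finite := by
        apply Set.Finite.subset (Set.finite_Icc (n0 + 1) (n1 - 1))
        intro x hx
        have := hgsup hx
        simp only [Set.mem_setOf_eq] at this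
        have h1 : n0 ≤ x - 1 := by
          have : ⌊a⌋ < x - 1 := Int.floor_lt.mpr (by push_cast; linarith [this.1])
          omega
        have h2 : x + 1 ≤ n1 := by
          have : x + 1 < ⌈b⌉ := Int.lt_ceil.mpr (by push_cast; linarith [this.2])
          omega
        simp only [Set.mem_Icc]; omega
      have key : ∀ C : ℤ → K, (∀ x : ℤ, C (x - 1) - (α + α⁻¹) * C x + C (x + 1) = 0) →
          (∑ᶠ x : ℤ, f x * C x) = 0 := by
        intro C hC
        have hfin1 : (Function.support fun x => g (x - 1) * C x).Finite := by
          apply Set.Finite.subset (hgfin.image (· + 1))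
          intro x hx
          simp only [Function.mem_support] at hx
          have : g (x - 1) ≠ 0 := fun h => hx (by simp [h])
          exact ⟨x - 1, this, by ring⟩
        have hfin2 : (Function.support fun x => -(α + α⁻¹) * (g x * C x)).Finite := by
          apply Set.Finite.subset hgfin
          intro x hx
          simp only [Function.mem_support] at hx ⊢
          intro h; exact hx (by simp [h])
        have hfin3 : (Function.support fun x => g (x + 1) * C x).Finite := by
          apply Set.Finite.subset (hgfin.image (· - 1))
          intro x hx
          simp only [Function.mem_support] at hx
          have : g (x + 1) ≠ 0 := fun h => hx (by simp [h])
          exact ⟨x + 1, this, by ring⟩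
        have e1 : (∑ᶠ x : ℤ, f x * C x)
            = ∑ᶠ x : ℤ, (g (x - 1) * C x + (-(α + α⁻¹) * (g x * C x) + g (x + 1) * C x)) := by
          apply finsum_congr
          intro x
          rw [← hgQ]
          show (g (x - 1) - (α + α⁻¹) * g x + g (x + 1)) * C x = _
          ring
        rw [e1, finsum_add_distrib hfin1 (Set.Finite.subset (hfin2.union hfin3) (by
          intro x hx
          simp only [Function.mem_support] at hx
          by_contra hc
          simp only [Set.mem_union, Function.mem_support, not_or, not_not] at hc
          rw [hc.1, hc.2, add_zero] at hx
          exact hx rfl)),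
          finsum_add_distrib hfin2 hfin3]
        have s1 : (∑ᶠ x : ℤ, g (x - 1) * C x) = ∑ᶠ x : ℤ, g x * C (x + 1) := by
          have := finsum_comp_equiv (Equiv.addRight (1 : ℤ))
            (f := fun x => g (x - 1) * C x)
          simp only [Equiv.coe_addRight, add_sub_cancel_right] at this
          exact this.symm
        have s3 : (∑ᶠ x : ℤ, g (x + 1) * C x) = ∑ᶠ x : ℤ, g x * C (x - 1) := by
          have := finsum_comp_equiv (Equiv.subRight (1 : ℤ))
            (f := fun x => g (x + 1) * C x)
          simp only [Equiv.subRight_apply, sub_add_cancel] at this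
          exact this.symm
        rw [s1, s3]
        have hfin1' : (Function.support fun x => g x * C (x + 1)).Finite := by
          apply Set.Finite.subset hgfin
          intro x hx
          simp only [Function.mem_support] at hx ⊢
          intro h; exact hx (by simp [h])
        have hfin3' : (Function.support fun x => g x * C (x - 1)).Finite := by
          apply Set.Finite.subset hgfin
          intro x hx
          simp only [Function.mem_support] at hx ⊢
          intro h; exact hx (by simp [h])
        rw [← finsum_add_distrib hfin2 hfin3', ← finsum_add_distrib hfin1'
          (Set.Finite.subset (hfin2.union hfin3') (by
            intro x hx
            simp only [Function.mem_support] at hx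
            by_contra hc
            simp only [Set.mem_union, Function.mem_support, not_or, not_not] at hc
            rw [hc.1, hc.2, add_zero] at hx
            exact hx rfl))]
        have : ∀ x : ℤ, g x * C (x + 1) + (-(α + α⁻¹) * (g x * C x) + g x * C (x - 1))
            = g x * (C (x - 1) - (α + α⁻¹) * C x + C (x + 1)) := fun x => by ring
        rw [finsum_congr fun x => by rw [this x, hC x, mul_zero]]
        exact finsum_zero
      exact ⟨key A hQA, key B hQB⟩
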